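/- For n = 2 and the candidate measure with ν(X₁) = ν(X₂) = 4k/(3k-1) constant on singletons, the value sup over the three critical set types of |f_{k,2}(A) - ν(A)| equals 3 - 4k/(3k-1) - 4/(3k-1), which tends to 5/3 as k → ∞; hence K ≥ 5/3 follows from the n = 2 construction alone. -/

import Mathlib

open Finset Filter

def fkn (n k : ℕ) (A : Finset (Fin n × Fin k)) : ℝ :=
  if A = ∅ then 0
  else if (∀ j : Fin n, ∃ i : Fin k, (j, i) ∈ A) ∧ (∃ j : Fin n, ∀ i : Fin k, (j, i) ∈ A)
    then 3 else 1

def OneAdditive {Ω : Type*} [DecidableEq Ω] (f : Finset Ω → ℝ) : Prop :=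
  f ∅ = 0 ∧ ∀ A B : Finset Ω, Disjoint A B → |f A + f B - f (A ∪ B)| ≤ 1

def IsAdditive {Ω : Type*} [DecidableEq Ω] (μ : Finset Ω → ℝ) : Prop :=
  μ ∅ = 0 ∧ ∀ A B : Finset Ω, Disjoint A B → μ (A ∪ B) = μ A + μ B

/-- The candidate measure on `Ω_{k,2}` assigning mass `4/(3k-1)` to each singleton. -/
noncomputable def nu2 (k : ℕ) (A : Finset (Fin 2 × Fin k)) : ℝ :=
  (A.card : ℝ) * (4 / (3 * (k : ℝ) - 1))

/- ### Auxiliary lemmas -/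

def Pc (n k : ℕ) (A : Finset (Fin n × Fin k)) : Prop :=
  (∀ j : Fin n, ∃ i : Fin k, (j, i) ∈ A) ∧ (∃ j : Fin n, ∀ i : Fin k, (j, i) ∈ A)

instance (n k : ℕ) (A : Finset (Fin n × Fin k)) : Decidable (Pc n k A) := by
  unfold Pc; infer_instance

lemma fkn_def (n k : ℕ) (A : Finset (Fin n × Fin k)) :
    fkn n k A = if A = ∅ then 0 else if Pc n k A then 3 else 1 := rfl

lemma Pc_mono {n k : ℕ} {A B : Finset (Fin n × Fin k)} (h : A ⊆ B) (hA : Pc n k A) :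
    Pc n k B :=
  ⟨fun j => (hA.1 j).imp fun _ hi => h hi, (hA.2).imp fun _ hj i => h (hj i)⟩

lemma Pc_not_both {n k : ℕ} {A B : Finset (Fin n × Fin k)} (hd : Disjoint A B)
    (hA : Pc n k A) (hB : Pc n k B) : False := by
  obtain ⟨j, hj⟩ := hB.2
  obtain ⟨i, hi⟩ := hA.1 j
  exact (Finset.disjoint_left.mp hd hi) (hj i)

lemma oneAdd_fkn (k : ℕ) : (fkn 2 k ∅ = 0) ∧ ∀ A B : Finset (Fin 2 × Fin k), Disjoint A B →
    |fkn 2 k A + fkn 2 k B - fkn 2 k (A ∪ B)| ≤ 1 := by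
  refine ⟨by simp [fkn], fun A B hd => ?_⟩
  rcases eq_or_ne A ∅ with rfl | hA
  · simp [fkn_def]
  rcases eq_or_ne B ∅ with rfl | hB
  · simp [fkn_def]
  have hAB : A ∪ B ≠ ∅ := by simp [Finset.union_eq_empty, hA]
  rw [fkn_def, fkn_def, fkn_def, if_neg hA, if_neg hB, if_neg hAB]
  by_cases hPA : Pc 2 k A
  · have hPB : ¬ Pc 2 k B := fun h => Pc_not_both hd hPA h
    have hPAB : Pc 2 k (A ∪ B) := Pc_mono Finset.subset_union_left hPA
    rw [if_pos hPA, if_neg hPB, if_pos hPAB]; norm_num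
  · by_cases hPB : Pc 2 k B
    · have hPAB : Pc 2 k (A ∪ B) := Pc_mono Finset.subset_union_right hPB
      rw [if_neg hPA, if_pos hPB, if_pos hPAB]; norm_num
    · rw [if_neg hPA, if_neg hPB]; split_ifs <;> norm_num

section
variable (k : ℕ)

def emb (j : Fin 2) : Fin k ↪ Fin 2 × Fin k :=
  ⟨fun i => (j, i), fun a b h => by simpa using h⟩

lemma X_eq (j : Fin 2) :
    (univ.filter fun x : Fin 2 × Fin k => x.1 = j) = univ.map (emb k j) := by
  ext ⟨a, b⟩
  simp [emb, Prod.ext_iff, eq_comm]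
  exact ⟨fun h => ⟨b, h.symm, rfl⟩, fun ⟨_, h, _⟩ => h.symm⟩

lemma card_X (j : Fin 2) :
    ((univ.filter fun x : Fin 2 × Fin k => x.1 = j)).card = k := by
  rw [X_eq]; simp

variable {k}

lemma fkn_crit1 (hk : 2 ≤ k) (j₁ j₂ : Fin 2) (hj : j₁ ≠ j₂) (ω : Fin k) :
    fkn 2 k ((univ.filter fun x => x.1 = j₁) ∪ {(j₂, ω)}) = 3 := by
  have hne : ((univ.filter fun x : Fin 2 × Fin k => x.1 = j₁) ∪ {(j₂, ω)}) ≠ ∅ := by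
    simp [Finset.union_eq_empty]
  rw [fkn_def, if_neg hne, if_pos]
  constructor
  · intro j
    rcases eq_or_ne j j₂ with rfl | h
    · exact ⟨ω, by simp⟩
    · exact ⟨ω, by simp [Finset.mem_union, Finset.mem_filter]; right; omega⟩
  · exact ⟨j₁, fun i => by simp⟩

lemma fkn_crit2 (hk : 2 ≤ k) (ω₁ ω₂ : Fin k) :
    fkn 2 k (univ \ {((0 : Fin 2), ω₁), ((1 : Fin 2), ω₂)}) = 1 := by
  have hlt : 1 < k := hk
  obtain ⟨x, hx⟩ : ∃ x : Fin k, x ≠ ω₁ := Fintype.exists_ne_of_one_lt_card (by simpa) ω₁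
  have hne : (univ \ {((0 : Fin 2), ω₁), ((1 : Fin 2), ω₂)}) ≠ ∅ := by
    refine Finset.ne_empty_of_mem (a := ((0 : Fin 2), x)) ?_
    simp [Prod.ext_iff, hx]
  rw [fkn_def, if_neg hne, if_neg]
  rintro ⟨-, j, hj⟩
  fin_cases j
  · simpa using (hj ω₁)
  · simpa using (hj ω₂)

lemma card_crit2 (ω₁ ω₂ : Fin k) :
    (univ \ {((0 : Fin 2), ω₁), ((1 : Fin 2), ω₂)}).card = 2 * k - 2 := by
  rw [Finset.card_sdiff_of_subset (Finset.subset_univ _)]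
  have : ({((0 : Fin 2), ω₁), ((1 : Fin 2), ω₂)} : Finset (Fin 2 × Fin k)).card = 2 := by
    rw [Finset.card_insert_of_notMem (by simp), Finset.card_singleton]
  simp [this]

lemma card_crit1 (j₁ j₂ : Fin 2) (hj : j₁ ≠ j₂) (ω : Fin k) :
    ((univ.filter fun x : Fin 2 × Fin k => x.1 = j₁) ∪ {(j₂, ω)}).card = k + 1 := by
  rw [Finset.card_union_of_disjoint, card_X, Finset.card_singleton]
  simp only [Finset.disjoint_left, Finset.mem_filter, Finset.mem_singleton]
  rintro ⟨a,b⟩ ⟨-, rfl⟩ h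
  exact hj (congrArg Prod.fst h)
end

lemma isAdditive_sum {Ω : Type*} [DecidableEq Ω] {μ : Finset Ω → ℝ} (h : IsAdditive μ)
    (A : Finset Ω) : μ A = ∑ x ∈ A, μ {x} := by
  induction A using Finset.induction_on with
  | empty => simpa using h.1
  | @insert a s ha ih =>
      rw [Finset.sum_insert ha, ← ih, Finset.insert_eq, h.2 _ _ (by simpa using ha)]

lemma tendsto_aux :
    Tendsto (fun k : ℕ => ((5 : ℝ) * k - 7) / (3 * k - 1)) atTop (nhds (5 / 3)) := by
  have hnum : Tendsto (fun n : ℕ => (5 : ℝ) - 7 / n) atTop (nhds 5) := by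
    simpa using tendsto_const_nhds.sub (tendsto_const_div_atTop_nhds_zero_nat (7 : ℝ))
  have hden : Tendsto (fun n : ℕ => (3 : ℝ) - 1 / n) atTop (nhds 3) := by
    simpa using tendsto_const_nhds.sub (tendsto_const_div_atTop_nhds_zero_nat (1 : ℝ))
  have := hnum.div hden (by norm_num)
  norm_num at this
  refine Tendsto.congr' ?_ this
  filter_upwards [eventually_ge_atTop 1] with n hn
  have hn' : (n : ℝ) ≠ 0 := by positivity
  have h3 : (3 : ℝ) * n - 1 ≠ 0 := by
    have : (1 : ℝ) ≤ n := by exact_mod_cast hn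
    nlinarith
  rw [Pi.div_apply]
  field_simp

/-- Key lower bound extracted from the `n = 2` construction at level `k`. -/
lemma key_lb (k : ℕ) (hk : 2 ≤ k) (K : ℝ)
    (H : ∀ f : Finset (Fin (2 * k)) → ℝ, OneAdditive f →
      ∃ μ : Finset (Fin (2 * k)) → ℝ, IsAdditive μ ∧ ∀ A, |f A - μ A| ≤ K) :
    ((5 : ℝ) * k - 7) / (3 * k - 1) ≤ K := by
  classical
  set e : Fin 2 × Fin k ≃ Fin (2 * k) := finProdFinEquiv
  set f : Finset (Fin (2 * k)) → ℝ := fun A => fkn 2 k (A.map e.symm.toEmbedding) with hf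
  have hmapmap : ∀ S : Finset (Fin 2 × Fin k),
      (S.map e.toEmbedding).map e.symm.toEmbedding = S := by
    intro S; ext x
    simp [Finset.mem_map_equiv]
  have hone : OneAdditive f := by
    constructor
    · simp [hf, (oneAdd_fkn k).1]
    · intro A B hd
      have hd' : Disjoint (A.map e.symm.toEmbedding) (B.map e.symm.toEmbedding) := by
        simpa [Finset.disjoint_map] using hd
      simpa [hf, Finset.map_union] using (oneAdd_fkn k).2 _ _ hd'
  obtain ⟨μ, hμadd, hμK⟩ := H f hone
  set ν : Finset (Fin 2 × Fin k) → ℝ := fun S => μ (S.map e.toEmbedding) with hν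
  have hνadd : IsAdditive ν := by
    constructor
    · simpa [hν] using hμadd.1
    · intro A B hd
      have hd' : Disjoint (A.map e.toEmbedding) (B.map e.toEmbedding) := by
        simpa [Finset.disjoint_map] using hd
      simpa [hν, Finset.map_union] using hμadd.2 _ _ hd'
  have hνK : ∀ S : Finset (Fin 2 × Fin k), |fkn 2 k S - ν S| ≤ K := by
    intro S
    have := hμK (S.map e.toEmbedding)
    simpa [hf, hν, hmapmap] using this
  -- singleton masses and totals
  obtain ⟨a, ha⟩ : ∃ a : Fin k → ℝ, ∀ i, ν {((0 : Fin 2), i)} = a i := ⟨_, fun _ => rfl⟩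
  obtain ⟨b, hb⟩ : ∃ b : Fin k → ℝ, ∀ i, ν {((1 : Fin 2), i)} = b i := ⟨_, fun _ => rfl⟩
  obtain ⟨s₁, hs₁⟩ : ∃ s₁ : ℝ, ∑ i, a i = s₁ := ⟨_, rfl⟩
  obtain ⟨s₂, hs₂⟩ : ∃ s₂ : ℝ, ∑ i, b i = s₂ := ⟨_, rfl⟩
  have hsum := isAdditive_sum hνadd
  have hXsum : ∀ j : Fin 2, ∑ x ∈ univ.filter (fun x : Fin 2 × Fin k => x.1 = j), ν {x}
      = ∑ i : Fin k, ν {(j, i)} := by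
    intro j; rw [X_eq, Finset.sum_map]; rfl
  have hdisj01 : ∀ j : Fin k,
      Disjoint (univ.filter (fun x : Fin 2 × Fin k => x.1 = 0)) {((1 : Fin 2), j)} := by
    intro j
    simp only [Finset.disjoint_left, Finset.mem_filter, Finset.mem_singleton]
    rintro ⟨x1, x2⟩ ⟨-, rfl⟩ h
    simp [Prod.ext_iff] at h
  have hdisj10 : ∀ j : Fin k,
      Disjoint (univ.filter (fun x : Fin 2 × Fin k => x.1 = 1)) {((0 : Fin 2), j)} := by
    intro j
    simp only [Finset.disjoint_left, Finset.mem_filter, Finset.mem_singleton]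
    rintro ⟨x1, x2⟩ ⟨-, rfl⟩ h
    simp [Prod.ext_iff] at h
  have hν1 : ∀ j : Fin k,
      ν ((univ.filter fun x : Fin 2 × Fin k => x.1 = 0) ∪ {((1 : Fin 2), j)}) = s₁ + b j := by
    intro j
    rw [hsum, Finset.sum_union (hdisj01 j), hXsum 0, Finset.sum_singleton]
    simp only [ha, hb, hs₁]
  have hν2 : ∀ j : Fin k,
      ν ((univ.filter fun x : Fin 2 × Fin k => x.1 = 1) ∪ {((0 : Fin 2), j)}) = s₂ + a j := by
    intro j
    rw [hsum, Finset.sum_union (hdisj10 j), hXsum 1, Finset.sum_singleton]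
    simp only [ha, hb, hs₂]
  have hνuniv : ν univ = s₁ + s₂ := by
    rw [hsum, Fintype.sum_prod_type, Fin.sum_univ_two]
    simp only [ha, hb, hs₁, hs₂]
  have hν3 : ∀ i j : Fin k,
      ν (univ \ {((0 : Fin 2), i), ((1 : Fin 2), j)}) = s₁ + s₂ - a i - b j := by
    intro i j
    rw [hsum, Finset.sum_sdiff_eq_sub (Finset.subset_univ _), Finset.sum_pair (by simp),
      ← hsum, hνuniv, ha, hb]
    ring
  -- the three families of constraints
  have hA : ∀ j : Fin k, 3 - (s₁ + b j) ≤ K := by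
    intro j
    have h := hνK ((univ.filter fun x : Fin 2 × Fin k => x.1 = 0) ∪ {((1 : Fin 2), j)})
    rw [fkn_crit1 hk 0 1 (by decide) j, hν1 j] at h
    linarith [abs_le.mp h]
  have hB : ∀ j : Fin k, 3 - (s₂ + a j) ≤ K := by
    intro j
    have h := hνK ((univ.filter fun x : Fin 2 × Fin k => x.1 = 1) ∪ {((0 : Fin 2), j)})
    rw [fkn_crit1 hk 1 0 (by decide) j, hν2 j] at h
    linarith [abs_le.mp h]
  have hC : ∀ i j : Fin k, (s₁ + s₂ - a i - b j) - 1 ≤ K := by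
    intro i j
    have h := hνK (univ \ {((0 : Fin 2), i), ((1 : Fin 2), j)})
    rw [fkn_crit2 hk i j, hν3 i j] at h
    linarith [abs_le.mp h]
  -- sum the constraints
  have hkr : (2 : ℝ) ≤ (k : ℝ) := by exact_mod_cast hk
  have hconstgen : ∀ c : ℝ, ∑ _j : Fin k, c = (k : ℝ) * c := by
    intro c; simp [Finset.sum_const, mul_comm]
  have hconstK : ∑ _j : Fin k, K = (k : ℝ) * K := hconstgen K
  have sum_lin : ∀ (c : ℝ) (g : Fin k → ℝ),
      ∑ j : Fin k, (c - g j) = (k : ℝ) * c - ∑ j, g j := by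
    intro c g
    rw [Finset.sum_sub_distrib]
    simp [Finset.sum_const, mul_comm]
  have h1 : (k : ℝ) * (3 - s₁) - s₂ ≤ (k : ℝ) * K := by
    have hle : ∑ j : Fin k, (3 - (s₁ + b j)) ≤ ∑ _j : Fin k, K :=
      Finset.sum_le_sum fun j _ => hA j
    have heq : ∑ j : Fin k, (3 - (s₁ + b j)) = (k : ℝ) * (3 - s₁) - s₂ := by
      rw [Finset.sum_congr rfl (fun j _ => by ring :
          ∀ j ∈ univ, 3 - (s₁ + b j) = (3 - s₁) - b j), sum_lin, hs₂]
    rw [heq, hconstK] at hle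
    exact hle
  have h2 : (k : ℝ) * (3 - s₂) - s₁ ≤ (k : ℝ) * K := by
    have hle : ∑ j : Fin k, (3 - (s₂ + a j)) ≤ ∑ _j : Fin k, K :=
      Finset.sum_le_sum fun j _ => hB j
    have heq : ∑ j : Fin k, (3 - (s₂ + a j)) = (k : ℝ) * (3 - s₂) - s₁ := by
      rw [Finset.sum_congr rfl (fun j _ => by ring :
          ∀ j ∈ univ, 3 - (s₂ + a j) = (3 - s₂) - a j), sum_lin, hs₁]
    rw [heq, hconstK] at hle
    exact hle
  have h3 : (k : ℝ) ^ 2 * (s₁ + s₂) - (k : ℝ) * (s₁ + s₂) - (k : ℝ) ^ 2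
      ≤ (k : ℝ) ^ 2 * K := by
    have hle : ∑ i : Fin k, ∑ j : Fin k, ((s₁ + s₂ - a i - b j) - 1)
        ≤ ∑ _i : Fin k, ∑ _j : Fin k, K :=
      Finset.sum_le_sum fun i _ => Finset.sum_le_sum fun j _ => hC i j
    have hinner : ∀ i : Fin k, ∑ j : Fin k, ((s₁ + s₂ - a i - b j) - 1)
        = (k : ℝ) * (s₁ + s₂ - a i - 1) - s₂ := by
      intro i
      rw [Finset.sum_congr rfl (fun j _ => by ring :
          ∀ j ∈ univ, (s₁ + s₂ - a i - b j) - 1 = (s₁ + s₂ - a i - 1) - b j), sum_lin, hs₂]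
    have houter : ∑ i : Fin k, ∑ j : Fin k, ((s₁ + s₂ - a i - b j) - 1)
        = (k : ℝ) * ((k : ℝ) * (s₁ + s₂ - 1) - s₂) - (k : ℝ) * s₁ := by
      rw [Finset.sum_congr rfl fun i _ => hinner i]
      rw [Finset.sum_congr rfl (fun i _ => by ring :
          ∀ i ∈ univ, (k : ℝ) * (s₁ + s₂ - a i - 1) - s₂
            = ((k : ℝ) * (s₁ + s₂ - 1) - s₂) - (k : ℝ) * a i), sum_lin, ← Finset.mul_sum, hs₁]
    have hconst2 : ∑ _i : Fin k, ∑ _j : Fin k, K = (k : ℝ) ^ 2 * K := by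
      rw [Finset.sum_congr rfl fun i _ => hconstK, hconstgen ((k : ℝ) * K)]
      ring
    rw [houter, hconst2] at hle
    nlinarith [hle]
  -- conclude
  have hkpos : (0 : ℝ) < (k : ℝ) := by linarith
  have hS : ((k : ℝ) - 1) * (s₁ + s₂) ≤ (k : ℝ) * (1 + K) := by nlinarith [h3, hkpos]
  have h12 : 6 * (k : ℝ) - ((k : ℝ) + 1) * (s₁ + s₂) ≤ 2 * (k : ℝ) * K := by nlinarith [h1, h2]
  have hfin : 5 * (k : ℝ) - 7 ≤ K * (3 * (k : ℝ) - 1) := by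
    nlinarith [mul_le_mul_of_nonneg_left h12 (by linarith : (0 : ℝ) ≤ (k : ℝ) - 1),
      mul_le_mul_of_nonneg_left hS (by linarith : (0 : ℝ) ≤ (k : ℝ) + 1), hkpos]
  rw [div_le_iff₀ (by linarith)]
  linarith

theorem stmt_18 (k : ℕ) (hk : 2 ≤ k) (ω₁ ω₂ : Fin k) :
    (max (|fkn 2 k ((univ.filter fun x => x.1 = 0) ∪ {((1 : Fin 2), ω₂)}) -
            nu2 k ((univ.filter fun x => x.1 = 0) ∪ {((1 : Fin 2), ω₂)})|)
        (max (|fkn 2 k ((univ.filter fun x => x.1 = 1) ∪ {((0 : Fin 2), ω₁)}) -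
                nu2 k ((univ.filter fun x => x.1 = 1) ∪ {((0 : Fin 2), ω₁)})|)
             (|fkn 2 k (univ \ {((0 : Fin 2), ω₁), ((1 : Fin 2), ω₂)}) -
                nu2 k (univ \ {((0 : Fin 2), ω₁), ((1 : Fin 2), ω₂)})|)) =
      3 - 4 * k / (3 * k - 1) - 4 / (3 * (k : ℝ) - 1)) ∧
    Tendsto (fun k : ℕ => 3 - 4 * k / (3 * k - 1) - 4 / (3 * (k : ℝ) - 1)) atTop
      (nhds (5 / 3)) ∧
    (∀ K : ℝ,
      (∀ m : ℕ, ∀ f : Finset (Fin m) → ℝ, OneAdditive f →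
        ∃ μ : Finset (Fin m) → ℝ, IsAdditive μ ∧ ∀ A, |f A - μ A| ≤ K) →
      5 / 3 ≤ K) := by
  have hkr : (2 : ℝ) ≤ (k : ℝ) := by exact_mod_cast hk
  have hd : (0 : ℝ) < 3 * (k : ℝ) - 1 := by linarith
  have hdne : (3 : ℝ) * (k : ℝ) - 1 ≠ 0 := ne_of_gt hd
  have htarget : ∀ k' : ℕ, (3 : ℝ) * k' - 1 ≠ 0 → 3 - 4 * k' / (3 * k' - 1) - 4 / (3 * (k' : ℝ) - 1)
      = (5 * (k' : ℝ) - 7) / (3 * k' - 1) := by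
    intro k' h
    field_simp
    ring
  refine ⟨?_, ?_, ?_⟩
  · -- Part 1: the sup computation
    have e1 : |fkn 2 k ((univ.filter fun x => x.1 = 0) ∪ {((1 : Fin 2), ω₂)}) -
        nu2 k ((univ.filter fun x => x.1 = 0) ∪ {((1 : Fin 2), ω₂)})|
        = (5 * (k : ℝ) - 7) / (3 * k - 1) := by
      rw [fkn_crit1 hk 0 1 (by decide) ω₂]
      unfold nu2
      rw [card_crit1 0 1 (by decide) ω₂]
      rw [abs_of_nonneg]
      · push_cast
        field_simp
        ring
      · push_cast
        rw [sub_nonneg, ← mul_div_assoc, div_le_iff₀ hd]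
        nlinarith
    have e2 : |fkn 2 k ((univ.filter fun x => x.1 = 1) ∪ {((0 : Fin 2), ω₁)}) -
        nu2 k ((univ.filter fun x => x.1 = 1) ∪ {((0 : Fin 2), ω₁)})|
        = (5 * (k : ℝ) - 7) / (3 * k - 1) := by
      rw [fkn_crit1 hk 1 0 (by decide) ω₁]
      unfold nu2
      rw [card_crit1 1 0 (by decide) ω₁]
      rw [abs_of_nonneg]
      · push_cast
        field_simp
        ring
      · push_cast
        rw [sub_nonneg, ← mul_div_assoc, div_le_iff₀ hd]
        nlinarith
    have e3 : |fkn 2 k (univ \ {((0 : Fin 2), ω₁), ((1 : Fin 2), ω₂)}) -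
        nu2 k (univ \ {((0 : Fin 2), ω₁), ((1 : Fin 2), ω₂)})|
        = (5 * (k : ℝ) - 7) / (3 * k - 1) := by
      rw [fkn_crit2 hk ω₁ ω₂]
      unfold nu2
      rw [card_crit2 ω₁ ω₂]
      have hcast : ((2 * k - 2 : ℕ) : ℝ) = 2 * (k : ℝ) - 2 := by
        have : 2 ≤ 2 * k := by omega
        push_cast [Nat.cast_sub (by omega : 2 ≤ 2 * k)]
        ring
      rw [hcast, abs_of_nonpos]
      · have h4 : (4 / (3 * (k : ℝ) - 1)) * (3 * k - 1) = 4 := div_mul_cancel₀ _ hdne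
        rw [eq_div_iff hdne]
        linear_combination (2 * (k : ℝ) - 2) * h4
      · rw [sub_nonpos, ← mul_div_assoc, le_div_iff₀ hd]
        nlinarith
    rw [e1, e2, e3, max_self, max_self, htarget k hdne]
  · -- Part 2: the limit
    refine Tendsto.congr' ?_ tendsto_aux
    filter_upwards [eventually_ge_atTop 1] with n hn
    have h3 : (3 : ℝ) * n - 1 ≠ 0 := by
      have : (1 : ℝ) ≤ n := by exact_mod_cast hn
      nlinarith
    exact (htarget n h3).symm
  · -- Part 3: the lower bound K ≥ 5/3
    intro K hH
    have hev : ∀ᶠ k' : ℕ in atTop, ((5 : ℝ) * k' - 7) / (3 * k' - 1) ≤ K := by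
      filter_upwards [eventually_ge_atTop 2] with k' hk'
      exact key_lb k' hk' K (hH (2 * k'))
    exact le_of_tendsto tendsto_aux hev
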